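/- Fix real k_s, k_m, k_ℓ with 𝛂 := k_s + k_ℓ − 1/2 > −1 and k_m ≥ 0; set 𝛃 = k_ℓ − 1/2. Let i ≥ 1 and (ξ_1,…,ξ_i,ξ_{i+1}) ∈ D_k(Θ_{i+1}). Define h(z) = Γ((z+ξ_1)/2) · Γ((z+𝛂−|𝛃|+1)/2)^{-1} · Γ(z) · Γ((z+ξ_i+2k_m)/2)^{-1} · ∏_{q=1}^{i−1} Γ((z+ξ_{q+1})/2) · Γ((z+ξ_q+2k_m)/2)^{-1}, and let S ⊂ ℂ be the set of z at which none of the Gamma arguments occurring in h is a nonpositive integer. Then there exists a nonzero complex number c such that h(z) → c as z → ξ_{i+1} within S. -/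
import Mathlib


noncomputable section

/-- The function `h(z)` of Lemma 4.4 of the paper (indices shifted to be 0-based:
`ξ j` here is `ξ_{j+1}` of the paper). -/
def hfun (α β km : ℝ) (i : ℕ) (ξ : ℕ → ℝ) (z : ℂ) : ℂ :=
  Complex.Gamma ((z + (ξ 0 : ℂ)) / 2) *
    (Complex.Gamma ((z + (α : ℂ) - ((|β| : ℝ) : ℂ) + 1) / 2))⁻¹ *
    Complex.Gamma z *
    (Complex.Gamma ((z + (ξ (i - 1) : ℂ) + 2 * (km : ℂ)) / 2))⁻¹ *
    ∏ q ∈ Finset.Icc 1 (i - 1),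
      Complex.Gamma ((z + (ξ q : ℂ)) / 2) *
        (Complex.Gamma ((z + (ξ (q - 1) : ℂ) + 2 * (km : ℂ)) / 2))⁻¹

/-- The set of `z` at which none of the Gamma arguments occurring in `hfun`
is a nonpositive integer. -/
def hGoodSet (α β km : ℝ) (i : ℕ) (ξ : ℕ → ℝ) : Set ℂ :=
  {z | ∀ n : ℕ,
    (z + (ξ 0 : ℂ)) / 2 ≠ -(n : ℂ) ∧
    (z + (α : ℂ) - ((|β| : ℝ) : ℂ) + 1) / 2 ≠ -(n : ℂ) ∧
    z ≠ -(n : ℂ) ∧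
    (z + (ξ (i - 1) : ℂ) + 2 * (km : ℂ)) / 2 ≠ -(n : ℂ) ∧
    ∀ q ∈ Finset.Icc 1 (i - 1),
      (z + (ξ q : ℂ)) / 2 ≠ -(n : ℂ) ∧
      (z + (ξ (q - 1) : ℂ) + 2 * (km : ℂ)) / 2 ≠ -(n : ℂ)}

lemma Gamma_add_nat' (w : ℂ) (hw : ∀ m : ℕ, w ≠ -m) (n : ℕ) :
    Complex.Gamma (w + n) = (∏ j ∈ Finset.range n, (w + j)) * Complex.Gamma w := by
  induction n with
  | zero => simp
  | succ n ih =>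
    have h0 : w + n ≠ 0 := fun h => hw n (by linear_combination h)
    have : Complex.Gamma (w + (n + 1 : ℕ)) = (w + n) * Complex.Gamma (w + n) := by
      rw [show (w + ((n : ℕ) + 1 : ℕ) : ℂ) = (w + n) + 1 by push_cast; ring,
        Complex.Gamma_add_one _ h0]
    rw [this, ih, Finset.prod_range_succ]
    ring

lemma Gamma_ratio (v : ℂ) (hv : ∀ m : ℕ, v ≠ -m) (n : ℕ) :
    Complex.Gamma (v + n) * (Complex.Gamma v)⁻¹ = ∏ j ∈ Finset.range n, (v + j) := by
  rw [Gamma_add_nat' v hv n, mul_assoc, mul_inv_cancel₀ (Complex.Gamma_ne_zero hv), mul_one]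

lemma Gamma_inv_eq (v : ℂ) (hv : ∀ m : ℕ, v ≠ -m) (n : ℕ) :
    (Complex.Gamma v)⁻¹ = (∏ j ∈ Finset.range n, (v + j)) * (Complex.Gamma (v + n))⁻¹ := by
  have hP : (∏ j ∈ Finset.range n, (v + j)) ≠ 0 :=
    Finset.prod_ne_zero_iff.mpr fun j _ h => hv j (by linear_combination h)
  conv_rhs => rw [Gamma_add_nat' v hv n, mul_inv, ← mul_assoc, mul_inv_cancel₀ hP, one_mul]

lemma houter (α β km : ℝ) (i : ℕ) (ξ : ℕ → ℝ) (a0 : ℕ) (a : ℕ → ℕ)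
    (h1 : ∀ z : ℂ, (z + (ξ 0:ℂ))/2 = (z + (α:ℂ) - ((|β|:ℝ):ℂ) + 1)/2 + (a0:ℂ))
    (hq : ∀ q ∈ Finset.Icc 1 (i-1), ∀ z : ℂ,
      (z + (ξ q:ℂ))/2 = (z + (ξ (q-1):ℂ) + 2*(km:ℂ))/2 + ((a (q-1) : ℕ) : ℂ))
    (z : ℂ) (hz : z ∈ hGoodSet α β km i ξ) :
    hfun α β km i ξ z =
      Complex.Gamma z * (Complex.Gamma ((z + (ξ (i-1):ℂ) + 2*(km:ℂ))/2))⁻¹ *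
      ((∏ j ∈ Finset.range a0, ((z + (α:ℂ) - ((|β|:ℝ):ℂ) + 1)/2 + (j:ℂ))) *
       ∏ q ∈ Finset.Icc 1 (i-1), ∏ j ∈ Finset.range (a (q-1)),
          ((z + (ξ (q-1):ℂ) + 2*(km:ℂ))/2 + (j:ℂ))) := by
  simp only [hGoodSet, Set.mem_setOf_eq] at hz
  have e1 : Complex.Gamma ((z + (ξ 0:ℂ))/2) *
      (Complex.Gamma ((z + (α:ℂ) - ((|β|:ℝ):ℂ) + 1)/2))⁻¹ =
      ∏ j ∈ Finset.range a0, ((z + (α:ℂ) - ((|β|:ℝ):ℂ) + 1)/2 + (j:ℂ)) := by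
    rw [h1 z]; exact Gamma_ratio _ (fun m => (hz m).2.1) a0
  have e2 : ∀ q ∈ Finset.Icc 1 (i-1),
      Complex.Gamma ((z + (ξ q:ℂ))/2) *
        (Complex.Gamma ((z + (ξ (q-1):ℂ) + 2*(km:ℂ))/2))⁻¹ =
      ∏ j ∈ Finset.range (a (q-1)), ((z + (ξ (q-1):ℂ) + 2*(km:ℂ))/2 + (j:ℂ)) := by
    intro q hq'
    rw [hq q hq' z]
    exact Gamma_ratio _ (fun m => ((hz m).2.2.2.2 q hq').2) _
  unfold hfun
  rw [Finset.prod_congr rfl e2]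
  rw [e1]
  ring

lemma mid_eq (b km : ℝ) (P aa : ℕ) (hc : b + 2*km = -(P:ℝ) - 2*(aa:ℝ))
    (z : ℂ) (hz3 : ∀ m : ℕ, z ≠ -m)
    (hv : ∀ m : ℕ, (z + (b:ℂ) + 2*(km:ℂ))/2 ≠ -m) :
    Complex.Gamma z * (Complex.Gamma ((z + (b:ℂ) + 2*(km:ℂ))/2))⁻¹ =
      Complex.Gamma (z + ((P+1:ℕ):ℂ)) * (∏ j ∈ Finset.range P, (z + (j:ℂ)))⁻¹ * (1/2) *
      (∏ j ∈ Finset.range (P + aa), ((z + (b:ℂ) + 2*(km:ℂ))/2 + (j:ℂ))) *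
      (Complex.Gamma ((z + (b:ℂ) + 2*(km:ℂ))/2 + ((P+aa+1:ℕ):ℂ)))⁻¹ := by
  have hzp : z + (P:ℂ) ≠ 0 := fun h => hz3 P (by linear_combination h)
  have hcC : (b:ℂ) + 2*(km:ℂ) = -(P:ℂ) - 2*(aa:ℂ) := by exact_mod_cast congrArg Complex.ofReal hc
  have hkey : (z + (b:ℂ) + 2*(km:ℂ))/2 + ((P+aa:ℕ):ℂ) = (z + (P:ℂ))/2 := by
    push_cast
    linear_combination hcC / 2
  have hprod : (∏ j ∈ Finset.range P, (z + (j:ℂ))) ≠ 0 :=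
    Finset.prod_ne_zero_iff.mpr fun j _ h => hz3 j (by linear_combination h)
  have hGz : Complex.Gamma z =
      (∏ j ∈ Finset.range (P+1), (z + (j:ℂ)))⁻¹ * Complex.Gamma (z + ((P+1:ℕ):ℂ)) := by
    rw [Gamma_add_nat' z hz3 (P+1), ← mul_assoc, inv_mul_cancel₀, one_mul]
    exact Finset.prod_ne_zero_iff.mpr fun j _ h => hz3 j (by linear_combination h)
  rw [Gamma_inv_eq ((z + (b:ℂ) + 2*(km:ℂ))/2) hv (P+aa+1), hGz,
    Finset.prod_range_succ, Finset.prod_range_succ, hkey, mul_inv]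
  have hinv : (z + (P:ℂ))⁻¹ * (z + (P:ℂ)) = 1 := inv_mul_cancel₀ hzp
  linear_combination (Complex.Gamma (z + ((P+1:ℕ):ℂ)) *
    (∏ j ∈ Finset.range P, (z + (j:ℂ)))⁻¹ * (1/2) *
    (∏ j ∈ Finset.range (P + aa), ((z + (b:ℂ) + 2*(km:ℂ))/2 + (j:ℂ))) *
    (Complex.Gamma ((z + (b:ℂ) + 2*(km:ℂ))/2 + ((P+aa+1:ℕ):ℂ)))⁻¹) * hinv

lemma close_lemma (S : Set ℂ) (z₀ : ℂ) (h g : ℂ → ℂ) (heq : ∀ z ∈ S, g z = h z)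
    (hc : ContinuousAt g z₀) (hne : g z₀ ≠ 0) :
    ∃ c : ℂ, c ≠ 0 ∧ Filter.Tendsto h (nhdsWithin z₀ S) (nhds c) :=
  ⟨g z₀, hne, tendsto_nhdsWithin_congr heq hc.continuousWithinAt⟩

theorem stmt13 (ks km kl α β : ℝ) (hα : α = ks + kl - 1 / 2) (hβ : β = kl - 1 / 2)
    (hα1 : -1 < α) (hkm : 0 ≤ km)
    (i : ℕ) (hi : 1 ≤ i)
    (ξ : ℕ → ℝ)
    -- `(ξ_1, …, ξ_{i+1}) ∈ D_k(Θ_{i+1})`, written with 0-based indices: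
    (hd1 : ∃ n : ℕ, ξ 0 + |β| - α - 1 = 2 * (n : ℝ))
    (hd2 : ξ i < 0)
    (hd3 : ∀ j : ℕ, j < i → ∃ n : ℕ, ξ (j + 1) - ξ j - 2 * km = 2 * (n : ℝ)) :
    ∃ c : ℂ, c ≠ 0 ∧
      Filter.Tendsto (hfun α β km i ξ) (nhdsWithin ((ξ i : ℝ) : ℂ) (hGoodSet α β km i ξ))
        (nhds c) := by
  obtain ⟨a0, ha0⟩ := hd1
  have hd3' : ∀ j : ℕ, ∃ n : ℕ, j < i → ξ (j + 1) - ξ j - 2 * km = 2 * (n : ℝ) := by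
    intro j
    by_cases h : j < i
    · obtain ⟨n, hn⟩ := hd3 j h; exact ⟨n, fun _ => hn⟩
    · exact ⟨0, fun h' => absurd h' h⟩
  choose a ha using hd3'
  -- monotonicity
  have hstep : ∀ j, j < i → ξ j ≤ ξ (j+1) := by
    intro j hj
    have h1 := ha j hj
    have h2 : (0:ℝ) ≤ (a j : ℝ) := Nat.cast_nonneg _
    linarith
  have hmono' : ∀ n q, q + n ≤ i → ξ q ≤ ξ (q + n) := by
    intro n
    induction n with
    | zero => intro q _; simp
    | succ n ihn =>
      intro q hq
      calc ξ q ≤ ξ (q+n) := ihn q (by omega)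
        _ ≤ ξ (q+n+1) := hstep (q+n) (by omega)
  have hmono : ∀ q, q ≤ i → ξ q ≤ ξ i := by
    intro q hq
    have := hmono' (i - q) q (by omega)
    rwa [show q + (i-q) = i by omega] at this
  -- shift identities
  have h1 : ∀ z : ℂ, (z + (ξ 0:ℂ))/2 = (z + (α:ℂ) - ((|β|:ℝ):ℂ) + 1)/2 + (a0:ℂ) := by
    intro z
    have h := congrArg Complex.ofReal ha0
    push_cast at h
    linear_combination h / 2
  have hq1 : ∀ q ∈ Finset.Icc 1 (i-1), ∀ z : ℂ,
      (z + (ξ q:ℂ))/2 = (z + (ξ (q-1):ℂ) + 2*(km:ℂ))/2 + ((a (q-1) : ℕ) : ℂ) := by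
    intro q hq' z
    simp only [Finset.mem_Icc] at hq'
    have hlt : q - 1 < i := by omega
    have h2 := ha (q-1) hlt
    rw [show q - 1 + 1 = q by omega] at h2
    have h3 := congrArg Complex.ofReal h2
    push_cast at h3
    linear_combination h3 / 2
  -- the last-step natural number
  have hlt1 : i - 1 < i := by omega
  have hai := ha (i-1) hlt1
  rw [show i - 1 + 1 = i by omega] at hai
  -- nonvanishing of the two polynomial parts at z₀ := (ξ i : ℂ)
  have hF1ne : (∏ j ∈ Finset.range a0,
      ((((ξ i : ℝ):ℂ) + (α:ℂ) - ((|β|:ℝ):ℂ) + 1)/2 + (j:ℂ))) ≠ 0 := by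
    refine Finset.prod_ne_zero_iff.mpr fun j hj hcontra => ?_
    have hjr : (j:ℝ) < (a0:ℝ) := by exact_mod_cast Finset.mem_range.mp hj
    have hr : (((ξ i + α - |β| + 1)/2 + (j:ℝ) : ℝ) : ℂ) = 0 := by
      rw [← hcontra]; push_cast; ring
    rw [Complex.ofReal_eq_zero] at hr
    have h0i : ξ 0 ≤ ξ i := hmono 0 (by omega)
    linarith
  have hFQne : (∏ q ∈ Finset.Icc 1 (i-1), ∏ j ∈ Finset.range (a (q-1)),
      ((((ξ i : ℝ):ℂ) + (ξ (q-1):ℂ) + 2*(km:ℂ))/2 + (j:ℂ))) ≠ 0 := by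
    refine Finset.prod_ne_zero_iff.mpr fun q hq' => ?_
    refine Finset.prod_ne_zero_iff.mpr fun j hj hcontra => ?_
    simp only [Finset.mem_Icc] at hq'
    have hlt : q - 1 < i := by omega
    have h2 := ha (q-1) hlt
    rw [show q - 1 + 1 = q by omega] at h2
    have hjr : (j:ℝ) < (a (q-1) : ℝ) := by exact_mod_cast Finset.mem_range.mp hj
    have hr : (((ξ i + ξ (q-1) + 2*km)/2 + (j:ℝ) : ℝ) : ℂ) = 0 := by
      rw [← hcontra]; push_cast; ring
    rw [Complex.ofReal_eq_zero] at hr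
    have hqi : ξ q ≤ ξ i := hmono q (by omega)
    linarith
  -- continuity of the two polynomial parts
  have hF1cont : Continuous fun z : ℂ => ∏ j ∈ Finset.range a0,
      ((z + (α:ℂ) - ((|β|:ℝ):ℂ) + 1)/2 + (j:ℂ)) :=
    continuous_finset_prod _ fun j _ => by fun_prop
  have hFQcont : Continuous fun z : ℂ => ∏ q ∈ Finset.Icc 1 (i-1),
      ∏ j ∈ Finset.range (a (q-1)), ((z + (ξ (q-1):ℂ) + 2*(km:ℂ))/2 + (j:ℂ)) :=
    continuous_finset_prod _ fun q _ => continuous_finset_prod _ fun j _ => by fun_prop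
  by_cases hint : ∃ m : ℕ, ξ i = -(m:ℝ)
  · -- ξ i is a negative integer
    obtain ⟨P, hP⟩ := hint
    set aa := a (i-1) with haa_def
    have hcb : ξ (i-1) + 2*km = -(P:ℝ) - 2*(aa:ℝ) := by linarith
    have hPC : ((ξ i : ℝ):ℂ) = -(P:ℂ) := by exact_mod_cast congrArg Complex.ofReal hP
    have hcbC : ((ξ (i-1) : ℝ):ℂ) + 2*(km:ℂ) = -(P:ℂ) - 2*(aa:ℂ) := by
      exact_mod_cast congrArg Complex.ofReal hcb
    refine close_lemma _ _ _ (fun z =>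
      (Complex.Gamma (z + ((P+1:ℕ):ℂ)) * (∏ j ∈ Finset.range P, (z + (j:ℂ)))⁻¹ * (1/2) *
        (∏ j ∈ Finset.range (P + aa), ((z + (ξ (i-1):ℂ) + 2*(km:ℂ))/2 + (j:ℂ))) *
        (Complex.Gamma ((z + (ξ (i-1):ℂ) + 2*(km:ℂ))/2 + ((P+aa+1:ℕ):ℂ)))⁻¹) *
      ((∏ j ∈ Finset.range a0, ((z + (α:ℂ) - ((|β|:ℝ):ℂ) + 1)/2 + (j:ℂ))) *
       ∏ q ∈ Finset.Icc 1 (i-1), ∏ j ∈ Finset.range (a (q-1)),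
          ((z + (ξ (q-1):ℂ) + 2*(km:ℂ))/2 + (j:ℂ)))) ?_ ?_ ?_
    · -- equality on the good set
      intro z hz
      have hz' := hz
      simp only [hGoodSet, Set.mem_setOf_eq] at hz'
      rw [houter α β km i ξ a0 a h1 hq1 z hz,
        mid_eq (ξ (i-1)) km P aa hcb z (fun m => (hz' m).2.2.1) (fun m => (hz' m).2.2.2.1)]
    · -- continuity at z₀
      have harg1 : ((ξ i : ℝ):ℂ) + ((P+1:ℕ):ℂ) = 1 := by rw [hPC]; push_cast; ring
      have harg2 : (((ξ i : ℝ):ℂ) + (ξ (i-1):ℂ) + 2*(km:ℂ))/2 + ((P+aa+1:ℕ):ℂ) = 1 := by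
        rw [hPC]
        push_cast
        push_cast at hcbC
        linear_combination hcbC / 2
      have hone : ∀ m : ℕ, (1:ℂ) ≠ -(m:ℂ) := by
        intro m hm
        have h1' : (1:ℝ) = -(m:ℝ) := by exact_mod_cast hm
        have hm0 : (0:ℝ) ≤ m := Nat.cast_nonneg m
        linarith
      have c1 : ContinuousAt (fun z : ℂ => Complex.Gamma (z + ((P+1:ℕ):ℂ))) ((ξ i : ℝ):ℂ) :=
        ContinuousAt.comp (g := Complex.Gamma) (f := fun z => z + ((P+1:ℕ):ℂ))
          ((Complex.differentiableAt_Gamma _ (fun m => by show ((ξ i:ℝ):ℂ) + ((P+1:ℕ):ℂ) ≠ -(m:ℂ); rw [harg1]; exact hone m)).continuousAt) (by fun_prop)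
      have c2 : ContinuousAt (fun z : ℂ => (∏ j ∈ Finset.range P, (z + (j:ℂ)))⁻¹) ((ξ i : ℝ):ℂ) := by
        refine ContinuousAt.inv₀ (Continuous.continuousAt ?_) ?_
        · exact continuous_finset_prod _ fun j _ => by fun_prop
        · refine Finset.prod_ne_zero_iff.mpr fun j hj hcontra => ?_
          have hjr : (j:ℝ) < (P:ℝ) := by exact_mod_cast Finset.mem_range.mp hj
          have hr : ((ξ i + (j:ℝ) : ℝ) : ℂ) = 0 := by rw [← hcontra]; push_cast; ring
          rw [Complex.ofReal_eq_zero] at hr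
          linarith
      have c3 : ContinuousAt (fun z : ℂ => ∏ j ∈ Finset.range (P + aa),
          ((z + (ξ (i-1):ℂ) + 2*(km:ℂ))/2 + (j:ℂ))) ((ξ i : ℝ):ℂ) :=
        (continuous_finset_prod _ fun j _ => by fun_prop).continuousAt
      have c4 : ContinuousAt (fun z : ℂ =>
          (Complex.Gamma ((z + (ξ (i-1):ℂ) + 2*(km:ℂ))/2 + ((P+aa+1:ℕ):ℂ)))⁻¹) ((ξ i : ℝ):ℂ) :=
        (Complex.differentiable_one_div_Gamma.continuous.comp (by fun_prop)).continuousAt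
      exact (((((c1.mul c2).mul continuousAt_const).mul c3).mul c4).mul
        ((hF1cont.continuousAt).mul (hFQcont.continuousAt)))
    · -- nonvanishing at z₀
      have harg1 : ((ξ i : ℝ):ℂ) + ((P+1:ℕ):ℂ) = 1 := by rw [hPC]; push_cast; ring
      have harg2 : (((ξ i : ℝ):ℂ) + (ξ (i-1):ℂ) + 2*(km:ℂ))/2 + ((P+aa+1:ℕ):ℂ) = 1 := by
        rw [hPC]
        push_cast
        push_cast at hcbC
        linear_combination hcbC / 2
      have hone : ∀ m : ℕ, (1:ℂ) ≠ -(m:ℂ) := by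
        intro m hm
        have h1' : (1:ℝ) = -(m:ℝ) := by exact_mod_cast hm
        have hm0 : (0:ℝ) ≤ m := Nat.cast_nonneg m
        linarith
      refine mul_ne_zero (mul_ne_zero (mul_ne_zero (mul_ne_zero (mul_ne_zero ?_ ?_)
        (by norm_num)) ?_) ?_) (mul_ne_zero hF1ne hFQne)
      · rw [harg1, Complex.Gamma_one]; exact one_ne_zero
      · refine inv_ne_zero (Finset.prod_ne_zero_iff.mpr fun j hj hcontra => ?_)
        have hjr : (j:ℝ) < (P:ℝ) := by exact_mod_cast Finset.mem_range.mp hj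
        have hr : ((ξ i + (j:ℝ) : ℝ) : ℂ) = 0 := by rw [← hcontra]; push_cast; ring
        rw [Complex.ofReal_eq_zero] at hr
        linarith
      · refine Finset.prod_ne_zero_iff.mpr fun j hj hcontra => ?_
        have hjr : (j:ℝ) < (P:ℝ) + (aa:ℝ) := by exact_mod_cast Finset.mem_range.mp hj
        have hr : (((ξ i + ξ (i-1) + 2*km)/2 + (j:ℝ) : ℝ) : ℂ) = 0 := by
          rw [← hcontra]; push_cast; ring
        rw [Complex.ofReal_eq_zero] at hr
        linarith
      · rw [harg2, Complex.Gamma_one]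
        exact inv_ne_zero one_ne_zero
  · -- ξ i is not a negative integer
    have hz3o : ∀ m : ℕ, ((ξ i : ℝ):ℂ) ≠ -(m:ℂ) := by
      intro m hm
      exact hint ⟨m, by exact_mod_cast hm⟩
    have hvio : ∀ m : ℕ, (((ξ i : ℝ):ℂ) + (ξ (i-1):ℂ) + 2*(km:ℂ))/2 ≠ -(m:ℂ) := by
      intro m hm
      have hm' : (((ξ i + ξ (i-1) + 2*km)/2 : ℝ):ℂ) = ((-(m:ℝ) : ℝ):ℂ) := by
        push_cast; linear_combination hm
      have hre : (ξ i + ξ (i-1) + 2*km)/2 = -(m:ℝ) := by exact_mod_cast hm'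
      by_cases hc2 : a (i-1) ≤ m
      · refine hint ⟨m - a (i-1), ?_⟩
        rw [Nat.cast_sub hc2]
        linarith
      · have hlt2 : (m:ℝ) < (a (i-1) : ℝ) := by exact_mod_cast Nat.lt_of_not_le hc2
        linarith
    refine close_lemma _ _ _ (fun z =>
      Complex.Gamma z * (Complex.Gamma ((z + (ξ (i-1):ℂ) + 2*(km:ℂ))/2))⁻¹ *
      ((∏ j ∈ Finset.range a0, ((z + (α:ℂ) - ((|β|:ℝ):ℂ) + 1)/2 + (j:ℂ))) *
       ∏ q ∈ Finset.Icc 1 (i-1), ∏ j ∈ Finset.range (a (q-1)),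
          ((z + (ξ (q-1):ℂ) + 2*(km:ℂ))/2 + (j:ℂ)))) ?_ ?_ ?_
    · intro z hz
      exact (houter α β km i ξ a0 a h1 hq1 z hz).symm
    · have c1 : ContinuousAt Complex.Gamma ((ξ i:ℝ):ℂ) :=
        (Complex.differentiableAt_Gamma _ hz3o).continuousAt
      have c2 : ContinuousAt
          (fun z : ℂ => (Complex.Gamma ((z + (ξ (i-1):ℂ) + 2*(km:ℂ))/2))⁻¹) ((ξ i:ℝ):ℂ) :=
        (Complex.differentiable_one_div_Gamma.continuous.comp (by fun_prop)).continuousAt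
      exact (c1.mul c2).mul (hF1cont.continuousAt.mul hFQcont.continuousAt)
    · exact mul_ne_zero (mul_ne_zero (Complex.Gamma_ne_zero hz3o)
        (inv_ne_zero (Complex.Gamma_ne_zero hvio))) (mul_ne_zero hF1ne hFQne)
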